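/- If a random vector X in ℝⁿ has a log-concave density f, then log ‖f‖_∞^{−1/n} ≤ h(X)/n ≤ 1 + log ‖f‖_∞^{−1/n}; equivalently, 0 ≤ h(X) + log ‖f‖_∞ ≤ n. -/

import Mathlib

open MeasureTheory ProbabilityTheory Real Pointwise

/-- A nonnegative function on ℝⁿ is log-concave if
`f(tx + (1-t)y) ≥ f(x)^t f(y)^(1-t)` for all `x, y` and `t ∈ [0,1]`. -/
def IsLogConcave {n : ℕ} (f : EuclideanSpace ℝ (Fin n) → ℝ) : Prop :=
  (∀ x, 0 ≤ f x) ∧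
  ∀ x y : EuclideanSpace ℝ (Fin n), ∀ t : ℝ, 0 ≤ t → t ≤ 1 →
    f x ^ t * f y ^ (1 - t) ≤ f (t • x + (1 - t) • y)

/-- The Shannon differential entropy `h(f) = -∫ f log f` of a density `f` on ℝⁿ. -/
noncomputable def hEnt {n : ℕ} (f : EuclideanSpace ℝ (Fin n) → ℝ) : ℝ :=
  -∫ x, f x * Real.log (f x)

section Aux

open Set Filter Topology ENNReal

/-- tangent line inequality: `a - a^t ≤ (1-t) * a log a`. -/
lemma tangent_ineq {a t : ℝ} (ha : 0 ≤ a) (ht0 : 0 < t) (ht1 : t < 1) :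
    a - a ^ t ≤ (1 - t) * (a * Real.log a) := by
  rcases eq_or_lt_of_le ha with h | h
  · simp [← h, Real.zero_rpow (ne_of_gt ht0)]
  · rw [Real.rpow_def_of_pos h]
    have hL : a = Real.exp (Real.log a) := (Real.exp_log h).symm
    set L := Real.log a with hLdef
    have h1 : (t - 1) * L + 1 ≤ Real.exp ((t - 1) * L) := Real.add_one_le_exp _
    have h2 : Real.exp (t * L) = Real.exp L * Real.exp ((t - 1) * L) := by
      rw [← Real.exp_add]; ring_nf
    have h3 : 0 < Real.exp L := Real.exp_pos _
    calc a - Real.exp (L * t) = Real.exp L - Real.exp L * Real.exp ((t - 1) * L) := by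
          rw [← h2]; rw [mul_comm L t]; rw [hL]
      _ ≤ Real.exp L - Real.exp L * ((t - 1) * L + 1) := by nlinarith
      _ = (1 - t) * (Real.exp L * L) := by ring
      _ = (1 - t) * (a * L) := by rw [← hL]

lemma IsLogConcave.aemeasurable {n : ℕ} {f : EuclideanSpace ℝ (Fin n) → ℝ}
    (hf : IsLogConcave f) :
    AEMeasurable f (volume : Measure (EuclideanSpace ℝ (Fin n))) := by
  set D : Set (EuclideanSpace ℝ (Fin n)) := {x | 0 < f x} with hDdef
  have hD : Convex ℝ D := by
    intro x hx y hy a b ha hb hab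
    have hb' : b = 1 - a := by linarith
    subst hb'
    have := hf.2 x y a ha (by linarith)
    have hpos : 0 < f x ^ a * f y ^ (1 - a) :=
      mul_pos (Real.rpow_pos_of_pos hx a) (Real.rpow_pos_of_pos hy (1 - a))
    exact lt_of_lt_of_le hpos this
  have hconc : ConcaveOn ℝ D (fun x => Real.log (f x)) := by
    refine ⟨hD, ?_⟩
    intro x hx y hy a b ha hb hab
    have hb' : b = 1 - a := by linarith
    subst hb'
    have hle := hf.2 x y a ha (by linarith)
    have hpos : 0 < f x ^ a * f y ^ (1 - a) :=
      mul_pos (Real.rpow_pos_of_pos hx a) (Real.rpow_pos_of_pos hy (1 - a))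
    have := Real.log_le_log hpos hle
    rw [Real.log_mul (ne_of_gt (Real.rpow_pos_of_pos hx a))
        (ne_of_gt (Real.rpow_pos_of_pos hy (1 - a))),
      Real.log_rpow hx, Real.log_rpow hy] at this
    simpa [smul_eq_mul] using this
  have hcontlog : ContinuousOn (fun x => Real.log (f x)) (interior D) :=
    hconc.continuousOn_interior
  have hcontf : ContinuousOn f (interior D) := by
    have : ContinuousOn (fun x => Real.exp (Real.log (f x))) (interior D) :=
      Real.continuous_exp.comp_continuousOn hcontlog
    refine this.congr ?_
    intro x hx
    have hxD : x ∈ D := interior_subset hx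
    exact (Real.exp_log hxD).symm
  have hfront : volume (frontier D) = 0 := hD.addHaar_frontier volume
  have h1 : AEMeasurable f (volume.restrict (interior D)) :=
    hcontf.aemeasurable measurableSet_interior
  have h2 : AEMeasurable f (volume.restrict (closure D)ᶜ) := by
    refine (aemeasurable_const (b := (0:ℝ))).congr ?_
    rw [Filter.EventuallyEq, ae_restrict_iff' (isClosed_closure.isOpen_compl).measurableSet]
    refine Filter.Eventually.of_forall fun x hx => ?_
    have hxD : x ∉ D := fun h => hx (subset_closure h)
    have : ¬ 0 < f x := hxD
    linarith [hf.1 x]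
  have hunion : AEMeasurable f (volume.restrict (interior D ∪ (closure D)ᶜ)) :=
    aemeasurable_union_iff.2 ⟨h1, h2⟩
  have hfull : volume.restrict (interior D ∪ (closure D)ᶜ) = volume := by
    apply Measure.restrict_eq_self_of_ae_mem
    have hsub : (interior D ∪ (closure D)ᶜ)ᶜ ⊆ frontier D := by
      intro x hx
      simp only [Set.compl_union, Set.mem_inter_iff, Set.mem_compl_iff, compl_compl] at hx
      exact ⟨hx.2, hx.1⟩
    have : volume ((interior D ∪ (closure D)ᶜ)ᶜ) = 0 :=
      measure_mono_null hsub hfront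
    exact (MeasureTheory.ae_iff.2 this)
  rwa [hfull] at hunion

lemma IsLogConcave.key {n : ℕ} {f : EuclideanSpace ℝ (Fin n) → ℝ}
    (hf : IsLogConcave f)
    (hint : ∫⁻ x, ENNReal.ofReal (f x) = 1)
    {x₀ : EuclideanSpace ℝ (Fin n)} (hc : 0 < f x₀) {t : ℝ}
    (ht0 : 0 < t) (ht1 : t < 1) :
    ENNReal.ofReal (f x₀ ^ (1 - t)) * ∫⁻ x, ENNReal.ofReal (f x ^ t)
      ≤ ENNReal.ofReal ((t ^ n)⁻¹) := by
  have hmeas := hf.aemeasurable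
  set v : EuclideanSpace ℝ (Fin n) := (1 - t) • x₀ with hv
  set G : EuclideanSpace ℝ (Fin n) → ℝ≥0∞ := fun y => ENNReal.ofReal (f (y + v)) with hG
  have hGae : AEMeasurable G (volume : Measure (EuclideanSpace ℝ (Fin n))) := by
    have h1 : AEMeasurable (fun y : EuclideanSpace ℝ (Fin n) => f (y + v)) volume :=
      hmeas.comp_quasiMeasurePreserving
        (measurePreserving_add_right volume v).quasiMeasurePreserving
    exact ENNReal.measurable_ofReal.comp_aemeasurable h1
  have hfin : Module.finrank ℝ (EuclideanSpace ℝ (Fin n)) = n := finrank_euclideanSpace_fin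
  have hmap := MeasureTheory.Measure.map_addHaar_smul
    (volume : Measure (EuclideanSpace ℝ (Fin n))) (ne_of_gt ht0)
  have habs : |(t ^ Module.finrank ℝ (EuclideanSpace ℝ (Fin n)))⁻¹| = (t ^ n)⁻¹ := by
    rw [hfin, abs_of_pos (by positivity)]
  -- change of variables
  have key1 : ∫⁻ x, G (t • x) ∂(volume : Measure (EuclideanSpace ℝ (Fin n)))
      = ENNReal.ofReal ((t ^ n)⁻¹) * ∫⁻ y, G y := by
    have hGmap : AEMeasurable G
        (Measure.map (t • · : EuclideanSpace ℝ (Fin n) → _) volume) := by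
      rw [hmap]
      exact hGae.smul_measure _
    have := lintegral_map' hGmap (aemeasurable_id.const_smul t)
    rw [← this, hmap, lintegral_smul_measure, habs, smul_eq_mul]
  have key2 : ∫⁻ y, G y = 1 := by
    have h := lintegral_add_right_eq_self (μ := (volume : Measure (EuclideanSpace ℝ (Fin n))))
      (fun z => ENNReal.ofReal (f z)) v
    rw [hG]
    rw [show (fun y : EuclideanSpace ℝ (Fin n) => ENNReal.ofReal (f (y + v)))
      = fun y => (fun z => ENNReal.ofReal (f z)) (y + v) from rfl, h, hint]
  have hpt : ∀ x, ENNReal.ofReal (f x₀ ^ (1 - t)) * ENNReal.ofReal (f x ^ t)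
      ≤ G (t • x) := by
    intro x
    rw [← ENNReal.ofReal_mul (Real.rpow_nonneg (hf.1 x₀) _)]
    refine ENNReal.ofReal_le_ofReal ?_
    have := hf.2 x x₀ t ht0.le ht1.le
    calc f x₀ ^ (1 - t) * f x ^ t = f x ^ t * f x₀ ^ (1 - t) := by ring
      _ ≤ f (t • x + (1 - t) • x₀) := this
      _ = f (t • x + v) := by rw [hv]
  calc ENNReal.ofReal (f x₀ ^ (1 - t)) * ∫⁻ x, ENNReal.ofReal (f x ^ t)
      = ∫⁻ x, ENNReal.ofReal (f x₀ ^ (1 - t)) * ENNReal.ofReal (f x ^ t) :=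
        (lintegral_const_mul' _ _ ENNReal.ofReal_ne_top).symm
    _ ≤ ∫⁻ x, G (t • x) := lintegral_mono hpt
    _ = ENNReal.ofReal ((t ^ n)⁻¹) * 1 := by rw [key1, key2]
    _ = ENNReal.ofReal ((t ^ n)⁻¹) := mul_one _

/-- A log-concave density is (pointwise) bounded. -/
lemma IsLogConcave.bounded {n : ℕ} {f : EuclideanSpace ℝ (Fin n) → ℝ}
    (hf : IsLogConcave f)
    (hint : ∫⁻ x, ENNReal.ofReal (f x) = 1) :
    ∃ B : ℝ, 0 < B ∧ ∀ x, f x ≤ B := by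
  have hmeas := hf.aemeasurable
  -- m := ∫ min(f,1) > 0
  set m : ℝ≥0∞ := ∫⁻ x, min (ENNReal.ofReal (f x)) 1 with hm
  have hm1 : m ≤ 1 := by
    rw [hm, ← hint]
    exact lintegral_mono fun x => min_le_left _ _
  have hm0 : m ≠ 0 := by
    intro h0
    have hminae : AEMeasurable (fun x => min (ENNReal.ofReal (f x)) 1)
        (volume : Measure (EuclideanSpace ℝ (Fin n))) :=
      (ENNReal.measurable_ofReal.comp_aemeasurable hmeas).min aemeasurable_const
    have := (lintegral_eq_zero_iff' hminae).1 h0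
    have hzero : ∀ᵐ x : EuclideanSpace ℝ (Fin n), ENNReal.ofReal (f x) = 0 := by
      filter_upwards [this] with x hx
      simp only [Pi.zero_apply, min_eq_iff] at hx
      rcases hx with h | h
      · exact h.1
      · exact absurd h.1 one_ne_zero
    have : (∫⁻ x, ENNReal.ofReal (f x)) = 0 := by
      rw [lintegral_congr_ae hzero, lintegral_zero]
    rw [hint] at this; exact one_ne_zero this
  -- m ≤ ∫ f^(1/2)
  have hmL : m ≤ ∫⁻ x, ENNReal.ofReal (f x ^ (1/2 : ℝ)) := by
    refine lintegral_mono fun x => ?_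
    rcases le_or_gt (f x) 1 with h | h
    · refine le_trans (min_le_left _ _) (ENNReal.ofReal_le_ofReal ?_)
      calc f x = f x ^ (1:ℝ) := (Real.rpow_one _).symm
        _ ≤ f x ^ (1/2 : ℝ) := by
          rcases eq_or_lt_of_le (hf.1 x) with h0 | h0
          · rw [← h0]
            rw [Real.zero_rpow one_ne_zero]
            positivity
          · exact Real.rpow_le_rpow_of_exponent_ge h0 h (by norm_num)
    · refine le_trans (min_le_right _ _) ?_
      rw [show (1:ℝ≥0∞) = ENNReal.ofReal 1 by simp]
      refine ENNReal.ofReal_le_ofReal ?_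
      exact Real.one_le_rpow h.le (by norm_num)
  -- conclude
  set C : ℝ≥0∞ := ENNReal.ofReal ((2:ℝ)⁻¹ ^ n)⁻¹ / m with hC
  have hCtop : C ≠ ⊤ := by
    rw [hC]
    exact (ENNReal.div_lt_top ENNReal.ofReal_ne_top hm0).ne
  refine ⟨max (C.toReal ^ 2) 1, by positivity, fun x => ?_⟩
  rcases eq_or_lt_of_le (hf.1 x) with h0 | h0
  · calc f x = 0 := h0.symm
      _ ≤ max (C.toReal ^ 2) 1 := by positivity
  · -- apply key with t = 1/2
    have hk := hf.key hint h0 (t := (1/2 : ℝ)) (by norm_num) (by norm_num)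
    have hhalf : (1:ℝ) - 1/2 = 1/2 := by norm_num
    have hb : ENNReal.ofReal (f x ^ (1/2:ℝ)) * m ≤ ENNReal.ofReal ((2:ℝ)⁻¹ ^ n)⁻¹ := by
      calc ENNReal.ofReal (f x ^ (1/2:ℝ)) * m
          ≤ ENNReal.ofReal (f x ^ (1/2:ℝ)) * ∫⁻ y, ENNReal.ofReal (f y ^ (1/2:ℝ)) :=
            mul_le_mul_right hmL _
        _ = ENNReal.ofReal (f x ^ (1 - 1/2:ℝ)) * ∫⁻ y, ENNReal.ofReal (f y ^ (1/2:ℝ)) := by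
            rw [hhalf]
        _ ≤ ENNReal.ofReal (((1/2:ℝ)) ^ n)⁻¹ := hk
        _ = ENNReal.ofReal ((2:ℝ)⁻¹ ^ n)⁻¹ := by norm_num
    have hle : ENNReal.ofReal (f x ^ (1/2:ℝ)) ≤ C := by
      rw [hC, ENNReal.le_div_iff_mul_le (Or.inl hm0) (Or.inr ENNReal.ofReal_ne_top)]
      exact hb
    have hle' : f x ^ (1/2:ℝ) ≤ C.toReal :=
      (ENNReal.ofReal_le_iff_le_toReal hCtop).1 hle
    have hsq : f x = (f x ^ (1/2:ℝ)) ^ 2 := by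
      rw [← Real.rpow_natCast (f x ^ (1/2:ℝ)) 2, ← Real.rpow_mul (hf.1 x)]
      norm_num
    calc f x = (f x ^ (1/2:ℝ)) ^ 2 := hsq
      _ ≤ C.toReal ^ 2 := by
          have hnn : 0 ≤ f x ^ (1/2:ℝ) := Real.rpow_nonneg (hf.1 x) _
          nlinarith
      _ ≤ max (C.toReal ^ 2) 1 := le_max_left _ _

variable {n : ℕ} {f : EuclideanSpace ℝ (Fin n) → ℝ}

lemma exists_pos (hf : IsLogConcave f)
    (hint : ∫⁻ x, ENNReal.ofReal (f x) = 1) : ∃ x, 0 < f x := by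
  by_contra h
  push_neg at h
  have hzero : ∀ x, f x = 0 := fun x => le_antisymm (h x) (hf.1 x)
  have : (∫⁻ x, ENNReal.ofReal (f x)) = 0 := by simp [hzero]
  rw [hint] at this
  exact one_ne_zero this

lemma rpow_aemeasurable (hf : IsLogConcave f) {t : ℝ} (ht : 0 ≤ t) :
    AEMeasurable (fun x => f x ^ t) (volume : Measure (EuclideanSpace ℝ (Fin n))) :=
  (Real.continuous_rpow_const ht).measurable.comp_aemeasurable hf.aemeasurable

/-- `∫⁻ f^t` is finite for `t ∈ (0,1)`. -/
lemma lint_rpow_lt_top (hf : IsLogConcave f)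
    (hint : ∫⁻ x, ENNReal.ofReal (f x) = 1) {t : ℝ} (ht0 : 0 < t) (ht1 : t < 1) :
    ∫⁻ x, ENNReal.ofReal (f x ^ t) < ⊤ := by
  obtain ⟨x₀, hx₀⟩ := exists_pos hf hint
  have hk := hf.key hint hx₀ ht0 ht1
  by_contra h
  push_neg at h
  have h' : ∫⁻ x, ENNReal.ofReal (f x ^ t) = ⊤ := top_le_iff.1 h
  rw [h', ENNReal.mul_top (by
      simp only [ne_eq, ENNReal.ofReal_eq_zero, not_le]
      exact Real.rpow_pos_of_pos hx₀ _)] at hk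
  exact (lt_irrefl ⊤ (lt_of_le_of_lt hk (ENNReal.ofReal_lt_top))).elim

lemma integrable_rpow (hf : IsLogConcave f)
    (hint : ∫⁻ x, ENNReal.ofReal (f x) = 1) {t : ℝ} (ht0 : 0 < t) (ht1 : t < 1) :
    Integrable (fun x => f x ^ t) (volume : Measure (EuclideanSpace ℝ (Fin n))) := by
  refine ⟨(rpow_aemeasurable hf ht0.le).aestronglyMeasurable, ?_⟩
  rw [hasFiniteIntegral_iff_ofReal (Eventually.of_forall fun x => Real.rpow_nonneg (hf.1 x) t)]
  exact lint_rpow_lt_top hf hint ht0 ht1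

lemma integrable_self (hf : IsLogConcave f)
    (hint : ∫⁻ x, ENNReal.ofReal (f x) = 1) :
    Integrable f (volume : Measure (EuclideanSpace ℝ (Fin n))) := by
  refine ⟨hf.aemeasurable.aestronglyMeasurable, ?_⟩
  rw [hasFiniteIntegral_iff_ofReal (Eventually.of_forall hf.1), hint]
  exact ENNReal.one_lt_top

lemma integral_self (hf : IsLogConcave f)
    (hint : ∫⁻ x, ENNReal.ofReal (f x) = 1) :
    ∫ x, f x = 1 := by
  rw [integral_eq_lintegral_of_nonneg_ae (Eventually.of_forall hf.1)
    hf.aemeasurable.aestronglyMeasurable, hint]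
  simp

/-- `f log f` is integrable. -/
lemma integrable_mul_log (hf : IsLogConcave f)
    (hint : ∫⁻ x, ENNReal.ofReal (f x) = 1) :
    Integrable (fun x => f x * Real.log (f x))
      (volume : Measure (EuclideanSpace ℝ (Fin n))) := by
  obtain ⟨B, hB0, hB⟩ := hf.bounded hint
  set c₁ : ℝ := max (Real.log B) 0 with hc₁
  have hc₁0 : 0 ≤ c₁ := le_max_right _ _
  have hg : Integrable (fun x => c₁ * f x + 2 * f x ^ (1/2:ℝ))
      (volume : Measure (EuclideanSpace ℝ (Fin n))) :=
    ((integrable_self hf hint).const_mul c₁).add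
      ((integrable_rpow hf hint (by norm_num) (by norm_num)).const_mul 2)
  refine Integrable.mono' hg ?_ ?_
  · exact (hf.aemeasurable.mul
      (Real.measurable_log.comp_aemeasurable hf.aemeasurable)).aestronglyMeasurable
  · refine Eventually.of_forall fun x => ?_
    set a := f x with ha
    have ha0 : 0 ≤ a := hf.1 x
    have haB : a ≤ B := hB x
    have hsqrt : 0 ≤ a ^ (1/2:ℝ) := Real.rpow_nonneg ha0 _
    have hupper : a * Real.log a ≤ c₁ * a := by
      rcases eq_or_lt_of_le ha0 with h0 | h0
      · simp [← h0]
      · have : Real.log a ≤ c₁ := le_trans (Real.log_le_log h0 haB) (le_max_left _ _)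
        calc a * Real.log a ≤ a * c₁ := mul_le_mul_of_nonneg_left this ha0
          _ = c₁ * a := mul_comm _ _
    have hlower : -(a * Real.log a) ≤ 2 * a ^ (1/2:ℝ) := by
      have := tangent_ineq ha0 (t := (1/2:ℝ)) (by norm_num) (by norm_num)
      nlinarith
    rw [Real.norm_eq_abs, abs_le]
    constructor
    · nlinarith
    · nlinarith

/-- main lower estimate: `log c - n ≤ ∫ f log f` for every positive value `c` of `f`. -/
lemma log_sub_le_integral (hf : IsLogConcave f)
    (hint : ∫⁻ x, ENNReal.ofReal (f x) = 1)
    {x₀ : EuclideanSpace ℝ (Fin n)} (hc : 0 < f x₀) :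
    Real.log (f x₀) - n ≤ ∫ x, f x * Real.log (f x) := by
  set c := f x₀ with hcdef
  set I := ∫ x, f x * Real.log (f x) with hI
  set g : ℝ → ℝ := fun s => ((s ^ n)⁻¹) * Real.exp (Real.log c * (s - 1)) with hg
  have hg1 : g 1 = 1 := by simp [hg]
  -- slope bound
  have hslope : ∀ t ∈ Ioo (0:ℝ) 1, slope g 1 t ≤ I := by
    intro t ht
    obtain ⟨ht0, ht1⟩ := ht
    -- ∫ f^t ≤ g t
    have hk := hf.key hint hc ht0 ht1
    have hLne : (∫⁻ x, ENNReal.ofReal (f x ^ t)) ≠ ⊤ :=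
      (lint_rpow_lt_top hf hint ht0 ht1).ne
    have hcpow_pos : (0:ℝ) < c ^ (1 - t) := Real.rpow_pos_of_pos hc _
    have hdiv : ∫⁻ x, ENNReal.ofReal (f x ^ t)
        ≤ ENNReal.ofReal ((t ^ n)⁻¹) / ENNReal.ofReal (c ^ (1 - t)) := by
      rw [ENNReal.le_div_iff_mul_le
        (Or.inl (by simp only [ne_eq, ENNReal.ofReal_eq_zero, not_le]; exact hcpow_pos))
        (Or.inl ENNReal.ofReal_ne_top)]
      rw [mul_comm]
      exact hk
    have hintt : ∫ x, f x ^ t ≤ (t ^ n)⁻¹ / c ^ (1 - t) := by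
      rw [integral_eq_lintegral_of_nonneg_ae
        (Eventually.of_forall fun x => Real.rpow_nonneg (hf.1 x) t)
        (rpow_aemeasurable hf ht0.le).aestronglyMeasurable]
      calc (∫⁻ x, ENNReal.ofReal (f x ^ t)).toReal
          ≤ (ENNReal.ofReal ((t ^ n)⁻¹) / ENNReal.ofReal (c ^ (1 - t))).toReal := by
            refine ENNReal.toReal_mono ?_ hdiv
            exact (ENNReal.div_lt_top ENNReal.ofReal_ne_top
              (by simp only [ne_eq, ENNReal.ofReal_eq_zero, not_le]; exact hcpow_pos)).ne
        _ = (t ^ n)⁻¹ / c ^ (1 - t) := by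
            rw [ENNReal.toReal_div, ENNReal.toReal_ofReal (by positivity),
              ENNReal.toReal_ofReal hcpow_pos.le]
    have hgt : (t ^ n)⁻¹ / c ^ (1 - t) = g t := by
      rw [hg]
      rw [Real.rpow_def_of_pos hc]
      rw [div_eq_mul_inv, ← Real.exp_neg]
      congr 2
      ring
    -- integral comparison
    have hcomp : 1 - g t ≤ (1 - t) * I := by
      have hmono : ∫ x, (f x - f x ^ t)
          ≤ ∫ x, (1 - t) * (f x * Real.log (f x)) := by
        refine integral_mono
          ((integrable_self hf hint).sub (integrable_rpow hf hint ht0 ht1))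
          ((integrable_mul_log hf hint).const_mul (1 - t)) ?_
        intro x
        exact tangent_ineq (hf.1 x) ht0 ht1
      rw [integral_sub (integrable_self hf hint) (integrable_rpow hf hint ht0 ht1),
        integral_const_mul, integral_self hf hint] at hmono
      have : 1 - g t ≤ 1 - ∫ x, f x ^ t := by
        rw [← hgt]; linarith
      linarith
    rw [slope_def_field, hg1]
    rw [div_le_iff_of_neg (by linarith : t - 1 < 0)]
    linarith
  -- derivative of g at 1
  have hderiv : HasDerivAt g (Real.log c - n) 1 := by
    have h1 : HasDerivAt (fun s : ℝ => (s ^ n)⁻¹)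
        (-(↑n * (1:ℝ) ^ (n - 1)) / ((1:ℝ) ^ n) ^ 2) 1 :=
      (hasDerivAt_pow n (1:ℝ)).inv (by simp)
    have h2 : HasDerivAt (fun s : ℝ => Real.log c * (s - 1)) (Real.log c) 1 := by
      simpa using ((hasDerivAt_id (1:ℝ)).sub_const 1).const_mul (Real.log c)
    have h3 := h2.exp
    have h4 := h1.mul h3
    refine h4.congr_deriv ?_
    simp
    ring
  have tends : Tendsto (slope g 1) (𝓝[<] 1) (𝓝 (Real.log c - n)) :=
    (hasDerivAt_iff_tendsto_slope.1 hderiv).mono_left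
      (nhdsWithin_mono 1 fun x hx => ne_of_lt hx)
  have ev : ∀ᶠ t in 𝓝[<] (1:ℝ), slope g 1 t ≤ I :=
    Filter.eventually_of_mem (Ioo_mem_nhdsLT zero_lt_one) hslope
  exact le_of_tendsto tends ev

end Aux

/-- Two-sided comparison of the entropy of a log-concave random vector with the
maximal value of its density: if `X` has log-concave density `f` on ℝⁿ, then
`0 ≤ h(X) + log ‖f‖_∞ ≤ n`, i.e.
`log ‖f‖_∞^{-1/n} ≤ h(X)/n ≤ 1 + log ‖f‖_∞^{-1/n}`. -/
theorem entropy_vs_max_density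
    {n : ℕ} (hn : 1 ≤ n)
    {Ω : Type} [MeasureSpace Ω] (hP : IsProbabilityMeasure (ℙ : Measure Ω))
    (X : Ω → EuclideanSpace ℝ (Fin n)) (hX : Measurable X)
    (f : EuclideanSpace ℝ (Fin n) → ℝ) (hf : IsLogConcave f)
    (hXf : Measure.map X (ℙ : Measure Ω)
      = volume.withDensity (fun x => ENNReal.ofReal (f x))) :
    0 ≤ hEnt f + Real.log ((essSup (fun x => ENNReal.ofReal (f x)) volume).toReal)
    ∧ hEnt f + Real.log ((essSup (fun x => ENNReal.ofReal (f x)) volume).toReal)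
        ≤ n := by
  have hint : ∫⁻ x, ENNReal.ofReal (f x) = 1 := by
    have h1 : (Measure.map X ℙ) Set.univ = 1 := by
      haveI := Measure.isProbabilityMeasure_map (μ := (ℙ : Measure Ω)) hX.aemeasurable
      exact measure_univ
    rw [hXf, withDensity_apply _ MeasurableSet.univ, setLIntegral_univ] at h1
    exact h1
  set M' := essSup (fun x => ENNReal.ofReal (f x)) volume with hMdef
  obtain ⟨B, hB0, hB⟩ := hf.bounded hint
  have hMtop : M' ≠ ⊤ := by
    have h := essSup_le_of_ae_le (μ := (volume : Measure (EuclideanSpace ℝ (Fin n))))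
      (ENNReal.ofReal B) (Filter.Eventually.of_forall fun x => ENNReal.ofReal_le_ofReal (hB x))
    exact ne_top_of_le_ne_top ENNReal.ofReal_ne_top h
  have hM0 : M' ≠ 0 := by
    intro h0
    have hae : ∀ᵐ x : EuclideanSpace ℝ (Fin n), ENNReal.ofReal (f x) ≤ M' :=
      ENNReal.ae_le_essSup _
    have hzero : ∀ᵐ x : EuclideanSpace ℝ (Fin n), ENNReal.ofReal (f x) = 0 := by
      filter_upwards [hae] with x hx
      rw [h0] at hx
      exact le_antisymm hx (zero_le)
    have : (∫⁻ x, ENNReal.ofReal (f x)) = 0 := by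
      rw [lintegral_congr_ae hzero, lintegral_zero]
    rw [hint] at this
    exact one_ne_zero this
  set M := M'.toReal with hMr
  have hMpos : 0 < M := ENNReal.toReal_pos hM0 hMtop
  have hfleM : ∀ᵐ x : EuclideanSpace ℝ (Fin n), f x ≤ M := by
    filter_upwards [ENNReal.ae_le_essSup (fun x : EuclideanSpace ℝ (Fin n) => ENNReal.ofReal (f x))]
      with x hx
    exact (ENNReal.ofReal_le_iff_le_toReal hMtop).1 hx
  set I := ∫ x, f x * Real.log (f x) with hIdef
  have hIlog := integrable_mul_log hf hint
  have hupper : I ≤ Real.log M := by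
    have hmono : I ≤ ∫ x, f x * Real.log M := by
      refine integral_mono_ae hIlog ((integrable_self hf hint).mul_const _) ?_
      filter_upwards [hfleM] with x hx
      rcases eq_or_lt_of_le (hf.1 x) with h0 | h0
      · simp [← h0]
      · exact mul_le_mul_of_nonneg_left (Real.log_le_log h0 hx) (hf.1 x)
    rwa [integral_mul_const, integral_self hf hint, one_mul] at hmono
  have hlower : Real.log M - n ≤ I := by
    by_contra hcon
    push_neg at hcon
    set r := (Real.log M + (I + n)) / 2 with hrdef
    have hr1 : I + n < r := by
      rw [hrdef]; linarith
    have hr2 : r < Real.log M := by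
      rw [hrdef]; linarith
    have hexp : Real.exp r < M :=
      calc Real.exp r < Real.exp (Real.log M) := Real.exp_lt_exp.2 hr2
        _ = M := Real.exp_log hMpos
    have hlt : ENNReal.ofReal (Real.exp r) < M' := by
      rw [ENNReal.ofReal_lt_iff_lt_toReal (Real.exp_pos r).le hMtop]
      exact hexp
    have hne : volume {x : EuclideanSpace ℝ (Fin n)
        | ENNReal.ofReal (Real.exp r) < ENNReal.ofReal (f x)} ≠ 0 := by
      intro h0
      have hae : ∀ᵐ x : EuclideanSpace ℝ (Fin n),
          ENNReal.ofReal (f x) ≤ ENNReal.ofReal (Real.exp r) := by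
        rw [ae_iff]
        simpa only [not_le] using h0
      have := essSup_le_of_ae_le (ENNReal.ofReal (Real.exp r)) hae
      exact absurd (lt_of_lt_of_le hlt this) (lt_irrefl _)
    obtain ⟨x₀, hx₀⟩ := nonempty_of_measure_ne_zero hne
    simp only [Set.mem_setOf_eq] at hx₀
    have hf0 : 0 < f x₀ := by
      by_contra h
      push_neg at h
      rw [ENNReal.ofReal_eq_zero.2 h] at hx₀
      exact (not_lt_of_ge (zero_le)) hx₀
    have hx₀' : Real.exp r < f x₀ := (ENNReal.ofReal_lt_ofReal_iff hf0).1 hx₀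
    have hkey := log_sub_le_integral hf hint hf0
    have hrlog : r ≤ Real.log (f x₀) := by
      rw [← Real.log_exp r]
      exact Real.log_le_log (Real.exp_pos r) hx₀'.le
    rw [← hIdef] at hkey
    linarith
  have hEnteq : hEnt f = -I := rfl
  constructor
  · rw [hEnteq]; linarith
  · rw [hEnteq]; linarith
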